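/- Let G be a finite directed graph with distinct vertices s and t, let p ≥ 1 and k ≥ 0, and let d_t = max{ dist_G(v, t) : v ∈ V(G), dist_G(v, t) < ∞ }, the maximum finite directed distance to t. If G admits p s-t walks sharing at most k arcs, then G admits p s-t walks sharing at most k arcs in which every walk has length at most p · d_t. -/

import Mathlib

namespace PaperRCA

/-- A walk in a directed graph with arc relation `A`: a nonempty list of vertices
in which each consecutive pair is an arc. -/
def IsDiWalk {V : Type*} (A : V → V → Prop) (w : List V) : Prop :=
  w ≠ [] ∧ w.Chain' A

/-- The list of arcs of a walk. -/
def walkArcs {V : Type*} (w : List V) : List (V × V) := w.zip w.tail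

/-- An arc `a` is shared by the family of walks `W` if it occurs at the same
position in two distinct walks of the family. -/
def SharedArc {V : Type*} {p : ℕ} (W : Fin p → List V) (a : V × V) : Prop :=
  ∃ i j : Fin p, i ≠ j ∧ ∃ r : ℕ,
    (walkArcs (W i))[r]? = some a ∧ (walkArcs (W j))[r]? = some a

/-- `v` can reach `t` in the digraph `A`. -/
def DiReach {V : Type*} (A : V → V → Prop) (v t : V) : Prop :=
  ∃ w : List V, IsDiWalk A w ∧ w.head? = some v ∧ w.getLast? = some t

/-- The directed distance from `v` to `t` in the digraph `A`: the length of a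
shortest directed walk (equivalently, path) from `v` to `t` (junk value if none
exists). -/
noncomputable def diDist {V : Type*} (A : V → V → Prop) (v t : V) : ℕ :=
  sInf {ℓ : ℕ | ∃ w : List V, IsDiWalk A w ∧ w.head? = some v ∧
    w.getLast? = some t ∧ w.length = ℓ + 1}

/-- `d_t`: the maximum, over all vertices `v` from which `t` is reachable, of the
directed distance from `v` to `t`. -/
noncomputable def maxDistTo {V : Type*} (A : V → V → Prop) (t : V) : ℕ :=
  sSup ((fun v => diDist A v t) '' {v : V | DiReach A v t})

section Helpers

variable {V : Type*} {A : V → V → Prop} {t : V}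

/-- arcs of a walk, elementwise. -/
lemma walkArcs_getElem? {w : List V} {r : ℕ} {a : V × V} :
    (walkArcs w)[r]? = some a ↔ w[r]? = some a.1 ∧ w[r + 1]? = some a.2 := by
  unfold walkArcs
  rw [← List.getElem?_tail (l := w) (i := r)]
  obtain ⟨x, y⟩ := a
  rw [show ((x, y) : V × V) = (x, y) from rfl]
  constructor
  · intro h
    have := (List.getElem?_zip_eq_some (l₁ := w) (l₂ := w.tail) (z := (x, y)) (i := r)).1 h
    exact this
  · intro h
    have := (List.getElem?_zip_eq_some (l₁ := w) (l₂ := w.tail) (z := (x, y)) (i := r)).2 h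
    exact this

lemma arc_of_walk (hw : IsDiWalk A w) {r : ℕ} {x y : V}
    (hx : w[r]? = some x) (hy : w[r + 1]? = some y) : A x y := by
  obtain ⟨h1, hx⟩ := List.getElem?_eq_some_iff.1 hx
  obtain ⟨h2, hy⟩ := List.getElem?_eq_some_iff.1 hy
  subst hx; subst hy
  have := List.isChain_iff_getElem.1 hw.2 r (by omega)
  simpa [List.get_eq_getElem] using this

/-- Walk concatenation. -/
lemma walk_append {w₁ w₂ : List V} {b : V} (h₁ : IsDiWalk A w₁) (h₂ : IsDiWalk A w₂)
    (hl : w₁.getLast? = some b) (hh : w₂.head? = some b) :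
    IsDiWalk A (w₁ ++ w₂.tail) ∧ (w₁ ++ w₂.tail).head? = w₁.head? ∧
      (w₁ ++ w₂.tail).getLast? = w₂.getLast? ∧
      (w₁ ++ w₂.tail).length + 1 = w₁.length + w₂.length := by
  obtain ⟨l₂, rfl⟩ : ∃ l₂, w₂ = b :: l₂ := by
    cases w₂ with
    | nil => simp at hh
    | cons c l => exact ⟨l, by simp at hh; rw [hh]⟩
  have hchain : (b :: l₂).Chain' A := h₂.2
  simp only [List.Chain', List.isChain_cons] at hchain
  have hne : w₁ ≠ [] := h₁.1
  refine ⟨⟨by simp [hne], ?_⟩, ?_, ?_, ?_⟩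
  · simp only [List.Chain']; rw [List.isChain_append]
    refine ⟨h₁.2, hchain.2, ?_⟩
    intro x hx y hy
    rw [hl] at hx
    simp only [Option.mem_def, Option.some_inj] at hx
    subst hx
    exact hchain.1 y hy
  · cases w₁ with
    | nil => exact absurd rfl hne
    | cons a l => simp
  · simp only [List.tail_cons]
    cases l₂ with
    | nil => simpa using hl
    | cons c l => rw [List.getLast?_append_of_ne_nil _ (by simp)]; simp
  · simp; omega

lemma diDist_le_of_walk {v : V} {w : List V} (hw : IsDiWalk A w) (hh : w.head? = some v)
    (hl : w.getLast? = some t) : diDist A v t + 1 ≤ w.length := by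
  have hne : w ≠ [] := hw.1
  have hlen : 1 ≤ w.length := List.length_pos_iff.2 hne
  have hmem : (w.length - 1) ∈ {ℓ : ℕ | ∃ w' : List V, IsDiWalk A w' ∧ w'.head? = some v ∧
      w'.getLast? = some t ∧ w'.length = ℓ + 1} := ⟨w, hw, hh, hl, by omega⟩
  have := Nat.sInf_le hmem
  unfold diDist
  omega

lemma exists_min_walk {v : V} (h : DiReach A v t) :
    ∃ w : List V, IsDiWalk A w ∧ w.head? = some v ∧ w.getLast? = some t ∧
      w.length = diDist A v t + 1 := by
  obtain ⟨w, hw, hh, hl⟩ := h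
  have hne : w ≠ [] := hw.1
  have hlen : 1 ≤ w.length := List.length_pos_iff.2 hne
  have hne' : {ℓ : ℕ | ∃ w' : List V, IsDiWalk A w' ∧ w'.head? = some v ∧
      w'.getLast? = some t ∧ w'.length = ℓ + 1}.Nonempty :=
    ⟨w.length - 1, w, hw, hh, hl, by omega⟩
  exact Nat.sInf_mem hne'

lemma diDist_le_maxDistTo [Fintype V] {v : V} (h : DiReach A v t) :
    diDist A v t ≤ maxDistTo A t := by
  unfold maxDistTo
  exact le_csSup (Set.toFinite _).bddAbove ⟨v, h, rfl⟩

lemma eq_t_of_diDist_eq_zero {v : V} (h : DiReach A v t) (h0 : diDist A v t = 0) : v = t := by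
  obtain ⟨w, hw, hh, hl, hlen⟩ := exists_min_walk h
  rw [h0] at hlen
  obtain ⟨a, rfl⟩ := List.length_eq_one_iff.1 hlen
  simp only [List.head?_cons, Option.some_inj] at hh
  simp only [List.getLast?_singleton, Option.some_inj] at hl
  rw [← hh, ← hl]

/-- the suffix of a walk ending at `t` is a walk ending at `t`. -/
lemma suffix_reach {w : List V} (hw : IsDiWalk A w) (hl : w.getLast? = some t)
    {q : ℕ} {x : V} (hq : w[q]? = some x) :
    DiReach A x t ∧ diDist A x t + q + 1 ≤ w.length := by
  have hqlen : q < w.length := (List.getElem?_eq_some_iff.1 hq).1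
  have hdne : w.drop q ≠ [] := by
    have : (w.drop q).length = w.length - q := List.length_drop
    intro hcon
    rw [hcon] at this
    simp at this
    omega
  have hdw : IsDiWalk A (w.drop q) := ⟨hdne, hw.2.drop q⟩
  have hdh : (w.drop q).head? = some x := by rw [List.head?_drop]; exact hq
  have hdl : (w.drop q).getLast? = some t := by
    conv_rhs => rw [← hl, ← List.take_append_drop q w]
    rw [List.getLast?_append_of_ne_nil _ hdne]
  have hreach : DiReach A x t := ⟨w.drop q, hdw, hdh, hdl⟩
  have := diDist_le_of_walk hdw hdh hdl
  rw [List.length_drop] at this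
  exact ⟨hreach, by omega⟩

/-- a shortest walk realizes distances along the way. -/
lemma exists_min_walk_dists {v : V} (h : DiReach A v t) :
    ∃ w : List V, IsDiWalk A w ∧ w.head? = some v ∧ w.getLast? = some t ∧
      w.length = diDist A v t + 1 ∧
      ∀ q (x : V), w[q]? = some x → diDist A x t + q = diDist A v t := by
  obtain ⟨w, hw, hh, hl, hlen⟩ := exists_min_walk h
  refine ⟨w, hw, hh, hl, hlen, ?_⟩
  intro q x hq
  have hqlen : q < w.length := (List.getElem?_eq_some_iff.1 hq).1
  -- upper: suffix
  obtain ⟨hreach, hub⟩ := suffix_reach hw hl hq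
  -- lower: prefix + min walk from x
  obtain ⟨P, hP, hPh, hPl, hPlen⟩ := exists_min_walk hreach
  have htlen0 : (w.take (q + 1)).length = q + 1 := by
    rw [List.length_take]; exact inf_eq_left.2 (by omega)
  have htake_ne : w.take (q + 1) ≠ [] := List.length_pos_iff.1 (by rw [htlen0]; omega)
  have htw : IsDiWalk A (w.take (q + 1)) := ⟨htake_ne, hw.2.take _⟩
  have hth : (w.take (q + 1)).head? = w.head? := by
    rw [List.head?_eq_getElem?, List.head?_eq_getElem?, List.getElem?_take]
    simp
  have htlen : (w.take (q + 1)).length = q + 1 := htlen0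
  have htl : (w.take (q + 1)).getLast? = some x := by
    rw [List.getLast?_eq_getElem?, htlen, Nat.add_sub_cancel, List.getElem?_take]
    simpa using hq
  obtain ⟨hNw, hNh, hNl, hNlen⟩ := walk_append htw hP htl hPh
  have hDv := diDist_le_of_walk hNw (by rw [hNh, hth]; exact hh) (by rw [hNl]; exact hPl)
  clear hq htake_ne htw hth htl hP hPh hPl hNw hNh hNl hh hl hw
  simp only [List.length_append, List.length_take, List.length_tail,
    inf_eq_left.2 (show q + 1 ≤ w.length by omega)] at hDv
  omega

lemma diDist_self : diDist A t t = 0 := by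
  have h := diDist_le_of_walk (v := t) (t := t) (A := A) (w := [t])
    ⟨by simp, List.isChain_singleton _⟩ (by simp) (by simp)
  simp at h
  omega

/-- replacing one walk of a family by a walk whose conflicts with the others are
already shared. -/
lemma update_step {p : ℕ} {W : Fin p → List V} {i0 : Fin p} {N : List V}
    (harc : ∀ l : Fin p, l ≠ i0 → ∀ (r : ℕ) (a : V × V), (walkArcs N)[r]? = some a →
      (walkArcs (W l))[r]? = some a → SharedArc W a)
    (hNlen : N.length < (W i0).length) :
    (∑ j, (Function.update W i0 N j).length) + 1 ≤ ∑ j, (W j).length ∧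
    ∀ a, SharedArc (Function.update W i0 N) a → SharedArc W a := by
  constructor
  · have hfun : (fun j => (Function.update W i0 N j).length) =
        Function.update (fun j => (W j).length) i0 N.length := by
      funext j
      rcases eq_or_ne j i0 with rfl | hne
      · simp
      · simp [Function.update_of_ne hne]
    have h1 : ∑ j, (Function.update W i0 N j).length =
        N.length + ∑ j ∈ Finset.univ \ {i0}, (W j).length := by
      rw [show (∑ j, (Function.update W i0 N j).length) =
        ∑ j, Function.update (fun j => (W j).length) i0 N.length j from by rw [← hfun]]
      exact Finset.sum_update_of_mem (Finset.mem_univ _) _ _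
    have h2 : ∑ j, (W j).length = (W i0).length + ∑ j ∈ Finset.univ \ {i0}, (W j).length :=
      Finset.sum_eq_add_sum_sdiff_singleton_of_mem (Finset.mem_univ _) _
    omega
  · rintro a ⟨i, j, hij, r, hi, hj⟩
    rcases eq_or_ne i i0 with rfl | hii
    · rw [Function.update_self] at hi
      rw [Function.update_of_ne (Ne.symm hij)] at hj
      exact harc j (Ne.symm hij) r a hi hj
    · rw [Function.update_of_ne hii] at hi
      rcases eq_or_ne j i0 with rfl | hjj
      · rw [Function.update_self] at hj
        obtain ⟨i', j', hij', r', h1', h2'⟩ := harc i hii r a hj hi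
        exact ⟨i', j', hij', r', h1', h2'⟩
      · rw [Function.update_of_ne hjj] at hj
        exact ⟨i, j, hij, r, hi, hj⟩

/-- arcs of a prefix are arcs of the original list, at the same positions. -/
lemma walkArcs_take {w : List V} {q r : ℕ} {a : V × V}
    (h : (walkArcs (w.take q))[r]? = some a) : (walkArcs w)[r]? = some a := by
  rw [walkArcs_getElem?] at h ⊢
  obtain ⟨h1, h2⟩ := h
  rw [List.getElem?_take] at h1 h2
  constructor
  · by_cases hr : r < q
    · simpa [hr] using h1
    · simp [hr] at h1
  · by_cases hr : r + 1 < q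
    · simpa [hr] using h2
    · simp [hr] at h2

/-- vertex of a list at a position, with junk default. -/
noncomputable def dvx (A : V → V → Prop) (t : V) (w : List V) (q : ℕ) : ℕ :=
  diDist A ((w[q]?).getD t) t

lemma dvx_eq {w : List V} {q : ℕ} {x : V} (h : w[q]? = some x) :
    dvx A t w q = diDist A x t := by
  simp [dvx, h]

end Helpers

section Main

variable {V : Type*} [Fintype V] {A : V → V → Prop} {s t : V}

lemma shorten (hst : s ≠ t) {p : ℕ} (hp : 1 ≤ p) :
    ∀ (n : ℕ) (W : Fin p → List V),
      (∀ i, IsDiWalk A (W i) ∧ (W i).head? = some s ∧ (W i).getLast? = some t) →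
      (∑ i, (W i).length) ≤ n →
      ∃ W' : Fin p → List V,
        (∀ i, IsDiWalk A (W' i) ∧ (W' i).head? = some s ∧ (W' i).getLast? = some t ∧
          (W' i).length ≤ p * maxDistTo A t + 1) ∧
        ∀ a, SharedArc W' a → SharedArc W a := by
  intro n
  induction n with
  | zero =>
    intro W hW hsum
    exfalso
    have h1 : 1 ≤ (W ⟨0, hp⟩).length := List.length_pos_iff.2 (hW ⟨0, hp⟩).1.1
    have h2 : (W ⟨0, hp⟩).length ≤ ∑ i, (W i).length :=
      Finset.single_le_sum (f := fun i => (W i).length) (fun i _ => Nat.zero_le _)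
        (Finset.mem_univ _)
    omega
  | succ n IH =>
    intro W hW hsum
    by_cases hshort : ∀ i, (W i).length ≤ p * maxDistTo A t + 1
    · exact ⟨W, fun i => ⟨(hW i).1, (hW i).2.1, (hW i).2.2, hshort i⟩, fun a ha => ha⟩
    push_neg at hshort
    obtain ⟨istar, histar⟩ := hshort
    by_cases htr : ∃ (i : Fin p) (q : ℕ), q + 1 < (W i).length ∧ (W i)[q]? = some t
    · -- truncate a walk through an interior `t`
      obtain ⟨i, q, hq, hqt⟩ := htr
      have hNlen : ((W i).take (q + 1)).length = q + 1 := by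
        rw [List.length_take]; exact inf_eq_left.2 (by omega)
      have hNne : (W i).take (q + 1) ≠ [] := List.length_pos_iff.1 (by rw [hNlen]; omega)
      have hNw : IsDiWalk A ((W i).take (q + 1)) := ⟨hNne, (hW i).1.2.take _⟩
      have hNh : ((W i).take (q + 1)).head? = some s := by
        rw [List.head?_eq_getElem?, List.getElem?_take]
        simpa using (List.head?_eq_getElem? (l := W i)) ▸ (hW i).2.1
      have hNl : ((W i).take (q + 1)).getLast? = some t := by
        rw [List.getLast?_eq_getElem?, hNlen, Nat.add_sub_cancel, List.getElem?_take]
        simpa using hqt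
      have harc : ∀ l : Fin p, l ≠ i → ∀ (r : ℕ) (a : V × V),
          (walkArcs ((W i).take (q + 1)))[r]? = some a →
          (walkArcs (W l))[r]? = some a → SharedArc W a := by
        intro l hl r a h1 h2
        exact ⟨i, l, Ne.symm hl, r, walkArcs_take h1, h2⟩
      obtain ⟨hsum', hsub⟩ := update_step harc (by omega)
      obtain ⟨W'', hW'', hsub''⟩ := IH (Function.update W i ((W i).take (q + 1)))
        (by
          intro j
          rcases eq_or_ne j i with rfl | hne
          · simpa using ⟨hNw, hNh, hNl⟩
          · simpa [Function.update_of_ne hne] using hW j)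
        (by omega)
      exact ⟨W'', hW'', fun a ha => hsub a (hsub'' a ha)⟩
    · -- the cut step
      push_neg at htr
      classical
      set d := maxDistTo A t with hd
      -- basic facts about walks of the family
      have hvx : ∀ (i : Fin p) (q : ℕ), q < (W i).length → ∃ x, (W i)[q]? = some x :=
        fun i q h => ⟨(W i)[q], List.getElem?_eq_getElem h⟩
      have hDle : ∀ (i : Fin p) (q : ℕ) (x : V), (W i)[q]? = some x →
          diDist A x t + q + 1 ≤ (W i).length ∧ diDist A x t ≤ d ∧ DiReach A x t := by
        intro i q x hx
        obtain ⟨hr, hb⟩ := suffix_reach (hW i).1 (hW i).2.2 hx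
        exact ⟨hb, diDist_le_maxDistTo hr, hr⟩
      have hD1 : ∀ (i : Fin p) (q : ℕ) (x : V), q + 1 < (W i).length →
          (W i)[q]? = some x → 1 ≤ diDist A x t := by
        intro i q x hq hx
        rcases Nat.eq_zero_or_pos (diDist A x t) with h0 | h1
        · exfalso
          have hxt := eq_t_of_diDist_eq_zero (hDle i q x hx).2.2 h0
          subst hxt
          exact htr i q hq hx
        · exact h1
      have hgap : ∀ (i : Fin p) (q : ℕ), q + 1 < (W i).length →
          q + 1 + dvx A t (W i) (q + 1) ≤ q + dvx A t (W i) q + d := by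
        intro i q hq
        obtain ⟨x, hx⟩ := hvx i q (by omega)
        obtain ⟨y, hy⟩ := hvx i (q + 1) hq
        rw [dvx_eq hx, dvx_eq hy]
        have h1 := hD1 i q x hq hx
        have h2 := (hDle i (q + 1) y hy).2.1
        omega
      have hs0 : ∀ i : Fin p, (W i)[0]? = some s :=
        fun i => (List.head?_eq_getElem? (l := W i)) ▸ (hW i).2.1
      have hlen1 : ∀ i : Fin p, 1 ≤ (W i).length :=
        fun i => List.length_pos_iff.2 (hW i).1.1
      have hds1 : 1 ≤ diDist A s t := by
        rcases Nat.eq_zero_or_pos (diDist A s t) with h0 | h1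
        · exact absurd (eq_t_of_diDist_eq_zero (hDle istar 0 s (hs0 istar)).2.2 h0) hst
        · exact h1
      have hdsd : diDist A s t ≤ d := (hDle istar 0 s (hs0 istar)).2.1
      have hdv0 : ∀ i : Fin p, dvx A t (W i) 0 = diDist A s t :=
        fun i => dvx_eq (hs0 i)
      have hd1 : 1 ≤ d := le_trans hds1 hdsd
      -- the stair positions: for each 1 ≤ c ≤ p a position whose sync value lies in (c·d, c·d+d]
      have hGall : ∀ c : ℕ, ∃ q : ℕ, 1 ≤ c → c ≤ p →
          (q + 1 < (W istar).length ∧ c * d < q + 1 + dvx A t (W istar) (q + 1) ∧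
            q + 1 + dvx A t (W istar) (q + 1) ≤ c * d + d) := by
        intro c
        by_cases hc : 1 ≤ c ∧ c ≤ p
        · obtain ⟨hc1, hcp⟩ := hc
          set Pq : ℕ → Prop := fun q => q < (W istar).length ∧
            q + dvx A t (W istar) q ≤ c * d with hPq
          have hbase : Pq 0 := by
            simp only [hPq]
            refine ⟨by omega, ?_⟩
            rw [hdv0 istar]
            have : 1 * d ≤ c * d := Nat.mul_le_mul_right d hc1
            omega
          set q0 := Nat.findGreatest Pq (W istar).length with hq0
          have hspec : Pq q0 := by
            rw [hq0]
            exact Nat.findGreatest_spec (Nat.zero_le _) hbase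
          simp only [hPq] at hspec
          obtain ⟨hspec1, hspec2⟩ := hspec
          have hq0lt : q0 + 1 < (W istar).length := by
            have h2 : c * d ≤ p * d := Nat.mul_le_mul_right d hcp
            omega
          have hmaxn : ¬ Pq (q0 + 1) := by
            apply Nat.findGreatest_is_greatest
            · rw [← hq0]; omega
            · omega
          simp only [hPq] at hmaxn
          push_neg at hmaxn
          have hgt : c * d < q0 + 1 + dvx A t (W istar) (q0 + 1) := hmaxn hq0lt
          have hub : q0 + 1 + dvx A t (W istar) (q0 + 1) ≤ c * d + d := by
            have := hgap istar q0 hq0lt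
            omega
          exact ⟨q0, fun _ _ => ⟨hq0lt, hgt, hub⟩⟩
        · exact ⟨0, fun h1 h2 => absurd ⟨h1, h2⟩ hc⟩
      choose qv hqv using hGall
      -- the p candidate values
      set qf : Fin p → ℕ := fun c => if c.val = 0 then 0 else qv c.val + 1 with hqf
      set βf : Fin p → ℕ := fun c => qf c + dvx A t (W istar) (qf c) with hβf
      have hq_lt : ∀ c : Fin p, qf c < (W istar).length := by
        intro c
        simp only [hqf]
        split
        · have := hlen1 istar; omega
        · rename_i h0
          exact (hqv c.val (by omega) (le_of_lt c.isLt)).1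
      have hβ_lb : ∀ c : Fin p, c.val * d < βf c := by
        intro c
        simp only [hβf, hqf]
        split
        · rename_i h0
          rw [h0, hdv0 istar]
          simp; omega
        · rename_i h0
          exact (hqv c.val (by omega) (le_of_lt c.isLt)).2.1
      have hβ_ub : ∀ c : Fin p, βf c ≤ (c.val + 1) * d := by
        intro c
        simp only [hβf, hqf]
        split
        · rename_i h0
          rw [h0, hdv0 istar, add_mul, one_mul]
          omega
        · rename_i h0
          have := (hqv c.val (by omega) (le_of_lt c.isLt)).2.2
          rw [add_mul, one_mul]
          omega
      have hβinj : Function.Injective βf := by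
        have hmono : ∀ c c' : Fin p, c.val < c'.val → βf c < βf c' := by
          intro c c' hlt
          calc βf c ≤ (c.val + 1) * d := hβ_ub c
          _ ≤ c'.val * d := Nat.mul_le_mul_right d (by omega)
          _ < βf c' := hβ_lb c'
        intro c c' h
        rcases lt_trichotomy c.val c'.val with h1 | h1 | h1
        · exact absurd h (ne_of_lt (hmono c c' h1))
        · exact Fin.ext h1
        · exact absurd h.symm (ne_of_lt (hmono c' c h1))
      -- pigeonhole: one candidate value avoids all the other walks' lengths
      have hpig : ∃ c : Fin p, ∀ l : Fin p, l ≠ istar → (W l).length - 1 ≠ βf c := by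
        by_contra hcon
        push_neg at hcon
        choose g hg1 hg2 using hcon
        have hginj : Function.Injective g := by
          intro c c' h
          apply hβinj
          rw [← hg2 c, ← hg2 c', h]
        obtain ⟨c, hc⟩ := (Finite.injective_iff_surjective.1 hginj) istar
        exact hg1 c hc
      obtain ⟨c₀, hc₀⟩ := hpig
      have hβpd : βf c₀ ≤ p * d := by
        calc βf c₀ ≤ (c₀.val + 1) * d := hβ_ub c₀
        _ ≤ p * d := Nat.mul_le_mul_right d c₀.isLt
      -- the latest synchronised position with value βf c₀
      set Mp : ℕ → Prop := fun q => ∃ l : Fin p,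
        q < (W l).length ∧ q + dvx A t (W l) q = βf c₀ with hMp
      set m := Nat.findGreatest Mp (βf c₀) with hm
      have hqβ : qf c₀ ≤ βf c₀ := by
        simp only [hβf]
        omega
      have hMwit : Mp (qf c₀) := ⟨istar, hq_lt c₀, rfl⟩
      have hMspec : Mp m := by
        rw [hm]
        exact Nat.findGreatest_spec hqβ hMwit
      have hMmax : ∀ q : ℕ, Mp q → q ≤ m := by
        intro q hq
        rw [hm]
        refine Nat.le_findGreatest ?_ hq
        obtain ⟨l, hql, hqs⟩ := hq
        omega
      simp only [hMp] at hMspec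
      obtain ⟨l₀, hl₀q, hl₀s⟩ := hMspec
      obtain ⟨z, hz⟩ := hvx l₀ m hl₀q
      have hdvz : dvx A t (W l₀) m = diDist A z t := dvx_eq hz
      have hβm : m + diDist A z t = βf c₀ := by rw [← hdvz]; exact hl₀s
      have hβ1 : 1 ≤ βf c₀ := by
        have := hβ_lb c₀
        omega
      -- m is an interior position of the walk l₀
      have hm1 : m + 1 < (W l₀).length := by
        rcases (show m + 1 < (W l₀).length ∨ m + 1 = (W l₀).length by omega) with h | h
        · exact h
        · exfalso
          have hlast : (W l₀)[m]? = some t := by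
            have hgl := (hW l₀).2.2
            rw [List.getLast?_eq_getElem?] at hgl
            rw [show m = (W l₀).length - 1 by omega]
            exact hgl
          rw [hlast] at hz
          have hzt : z = t := by injection hz.symm
          subst hzt
          rw [diDist_self] at hβm
          rcases eq_or_ne l₀ istar with rfl | hne
          · omega
          · exact hc₀ l₀ hne (by omega)
      have hz_t : z ≠ t := by
        intro hzt
        subst hzt
        exact htr l₀ m hm1 hz
      have hDz1 : 1 ≤ diDist A z t := hD1 l₀ m z hm1 hz
      -- shortest walk from z, realizing all intermediate distances
      obtain ⟨P, hPw, hPh, hPl, hPlen, hPd⟩ := exists_min_walk_dists (hDle l₀ m z hz).2.2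
      -- the new walk
      have hw1len : ((W l₀).take (m + 1)).length = m + 1 := by
        rw [List.length_take]; exact inf_eq_left.2 (by omega)
      have hw1ne : (W l₀).take (m + 1) ≠ [] := List.length_pos_iff.1 (by rw [hw1len]; omega)
      have hw1w : IsDiWalk A ((W l₀).take (m + 1)) := ⟨hw1ne, (hW l₀).1.2.take _⟩
      have hw1h : ((W l₀).take (m + 1)).head? = some s := by
        rw [List.head?_eq_getElem?, List.getElem?_take]
        simpa using hs0 l₀
      have hw1l : ((W l₀).take (m + 1)).getLast? = some z := by
        rw [List.getLast?_eq_getElem?, hw1len, Nat.add_sub_cancel, List.getElem?_take]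
        simpa using hz
      obtain ⟨hNw, hNh', hNl', hNlen'⟩ := walk_append hw1w hPw hw1l hPh
      set N := (W l₀).take (m + 1) ++ P.tail with hN
      have hNh : N.head? = some s := by rw [hNh']; exact hw1h
      have hNl : N.getLast? = some t := by rw [hNl']; exact hPl
      have hNlen : N.length = βf c₀ + 1 := by omega
      have hN_lo : ∀ q : ℕ, q < m + 1 → N[q]? = (W l₀)[q]? := by
        intro q hq
        rw [hN, List.getElem?_append_left (by omega), List.getElem?_take]
        simp [hq]
      have hNP : ∀ j : ℕ, N[m + j]? = P[j]? := by
        intro j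
        cases j with
        | zero =>
          rw [Nat.add_zero, hN_lo m (by omega), hz]
          rw [← List.head?_eq_getElem?]
          exact hPh.symm
        | succ j =>
          rw [hN, List.getElem?_append_right (by rw [hw1len]; omega)]
          rw [hw1len, List.getElem?_tail]
          congr 1
          omega
      have hNlt : N.length < (W l₀).length := by
        have h4 := (hDle l₀ m z hz).1
        rcases eq_or_ne l₀ istar with rfl | hne
        · omega
        · have := hc₀ l₀ hne
          omega
      -- the crucial conflict analysis
      have harc : ∀ l : Fin p, l ≠ l₀ → ∀ (r : ℕ) (a : V × V),
          (walkArcs N)[r]? = some a → (walkArcs (W l))[r]? = some a → SharedArc W a := by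
        intro l hl r a h1 h2
        rw [walkArcs_getElem?] at h1 h2
        obtain ⟨h1a, h1b⟩ := h1
        obtain ⟨h2a, h2b⟩ := h2
        by_cases hr : r + 1 < m + 1
        · refine ⟨l₀, l, Ne.symm hl, r, ?_, walkArcs_getElem?.2 ⟨h2a, h2b⟩⟩
          refine walkArcs_getElem?.2 ⟨?_, ?_⟩
          · rw [← hN_lo r (by omega)]; exact h1a
          · rw [← hN_lo (r + 1) hr]; exact h1b
        · exfalso
          obtain ⟨j, rfl⟩ : ∃ j, r = m + j := ⟨r - m, by omega⟩
          rw [hNP j] at h1a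
          rw [show m + j + 1 = m + (j + 1) by omega, hNP (j + 1)] at h1b
          have hDa1 := hPd j a.1 h1a
          have hDa2 := hPd (j + 1) a.2 h1b
          have hll : m + j < (W l).length := (List.getElem?_eq_some_iff.1 h2a).1
          have hll2 : m + j + 1 < (W l).length := by
            have := (List.getElem?_eq_some_iff.1 h2b).1
            omega
          have hdvl : dvx A t (W l) (m + j) = diDist A a.1 t := dvx_eq h2a
          have hMj : Mp (m + j) := ⟨l, hll, by rw [hdvl]; omega⟩
          have hj0 : j = 0 := by
            have := hMmax _ hMj
            omega
          subst hj0
          have hdvl2 : dvx A t (W l) (m + 1) = diDist A a.2 t := by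
            have hsome : (W l)[m + 1]? = some a.2 := by
              rw [show m + 1 = m + 0 + 1 by omega]
              exact h2b
            exact dvx_eq hsome
          have hM1 : Mp (m + 1) := ⟨l, by omega, by rw [hdvl2]; omega⟩
          have := hMmax _ hM1
          omega
      obtain ⟨hsum', hsub⟩ := update_step harc hNlt
      obtain ⟨W'', hW'', hsub''⟩ := IH (Function.update W l₀ N)
        (by
          intro j
          rcases eq_or_ne j l₀ with rfl | hne
          · simpa using ⟨hNw, hNh, hNl⟩
          · simpa [Function.update_of_ne hne] using hW j)
        (by omega)
      exact ⟨W'', hW'', fun a ha => hsub a (hsub'' a ha)⟩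

end Main

/-- If a finite digraph `G` with distinct vertices `s, t` admits
`p` `s`-`t` walks sharing at most `k` arcs, then it admits `p` `s`-`t` walks
sharing at most `k` arcs in which every walk has length at most `p · d_t` (a walk
on a vertex list `w` has length `w.length - 1`). -/
theorem stmt14 {V : Type*} [Fintype V] (A : V → V → Prop) (s t : V) (hst : s ≠ t)
    (p k : ℕ) (hp : 1 ≤ p)
    (h : ∃ W : Fin p → List V,
      (∀ i : Fin p, IsDiWalk A (W i) ∧ (W i).head? = some s ∧
        (W i).getLast? = some t) ∧
      {a : V × V | SharedArc W a}.ncard ≤ k) :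
    ∃ W : Fin p → List V,
      (∀ i : Fin p, IsDiWalk A (W i) ∧ (W i).head? = some s ∧
        (W i).getLast? = some t ∧ (W i).length ≤ p * maxDistTo A t + 1) ∧
      {a : V × V | SharedArc W a}.ncard ≤ k := by
  obtain ⟨W0, hW0, hk⟩ := h
  obtain ⟨W', hW', hsub⟩ := shorten hst hp (∑ i, (W0 i).length) W0 hW0 le_rfl
  refine ⟨W', hW', ?_⟩
  calc {a : V × V | SharedArc W' a}.ncard ≤ {a : V × V | SharedArc W0 a}.ncard :=
    Set.ncard_le_ncard (fun a ha => hsub a ha) (Set.toFinite _)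
  _ ≤ k := hk

end PaperRCA
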